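/- Let (r_ℓ)_{ℓ≥1} be a sequence of positive real numbers with r_ℓ → ∞ and r_ℓ/ℓ → 0 as ℓ → ∞, let η₁ > 2 and 0 < η₂ < √2. Then: (1) there are constants c₁, c₂ > 0 and L ≥ 1 such that for all ℓ ≥ L, all integers m with ℓ − 2r_ℓ ≤ m ≤ ℓ − r_ℓ, and all θ with |θ| < η₂ (r_ℓ/ℓ)^{1/2}, one has −c₁ ℓ r_ℓ ≤ Q_{ℓ,m}(θ) ≤ −c₂ ℓ r_ℓ; (2) there are constants c₁', c₂' > 0 and L' ≥ 1 such that for all ℓ ≥ L', all integers m with r_ℓ ≤ m ≤ 2r_ℓ, and all θ with |θ| < π/2 − η₁ r_ℓ/ℓ, one has −c₁' ℓ² ≤ Q_{ℓ,m}(θ) ≤ −c₂' ℓ². -/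

import Mathlib

open Real Filter



lemma aux1_upper (a L R M C : ℝ) (ha0 : 0 ≤ a) (ha2 : a < 2) (hL : 1 ≤ L) (hR : 2 ≤ R)
    (hR1 : 2*R ≤ (2-a)*L) (hR2 : (2*a+2)*R ≤ L) (hR4 : 4*R ≤ L)
    (hC0 : 0 < C) (hCL : L - a*R ≤ C*L)
    (hM1 : L - 2*R ≤ M) (hM2 : M ≤ L - R) :
    (M^2 - 1/4)/C - 1/4 - L*(L+1) ≤ -((2-a)/2) * L * R := by
  have hL0 : (0:ℝ) < L := by linarith
  rw [sub_le_iff_le_add, sub_le_iff_le_add, div_le_iff₀ hC0]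
  obtain ⟨K, hKdef⟩ : ∃ K:ℝ, K = -((2-a)/2) * L * R + L * (L+1) + 1/4 := ⟨_, rfl⟩
  rw [← hKdef]
  have hK : 0 ≤ K := by
    rw [hKdef]
    nlinarith [mul_nonneg ha0 (mul_nonneg hL0.le (by linarith : (0:ℝ) ≤ R)),
      mul_le_mul_of_nonneg_left hR4 hL0.le, mul_pos hL0 hL0]
  have hKC : K * (L - a*R) ≤ K * (C*L) := mul_le_mul_of_nonneg_left hCL hK
  have hM0 : 0 ≤ M := by linarith
  have hMsq : M^2 ≤ (L-R)^2 := by nlinarith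
  have hpoly : L*(M^2 - 1/4) ≤ K * (L - a*R) := by
    rw [hKdef]
    nlinarith [mul_nonneg (show (0:ℝ) ≤ (2-a)*L - 2*R by linarith)
        (show (0:ℝ) ≤ L*R by positivity),
      mul_nonneg (mul_nonneg ha0 (by linarith : (0:ℝ) ≤ 2-a))
        (show (0:ℝ) ≤ L*R^2 by positivity)]
  have h2 : (M^2 - 1/4) * L ≤ (K*C) * L := by
    rw [mul_comm]
    calc L * (M^2 - 1/4) ≤ K * (L - a*R) := hpoly
      _ ≤ K * (C*L) := hKC
      _ = K * C * L := (mul_assoc K C L).symm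
  exact le_of_mul_le_mul_right h2 hL0

lemma aux1_lower (L R M C : ℝ) (hL : 1 ≤ L) (hR : 2 ≤ R) (hR4 : 4*R ≤ L)
    (hC0 : 0 < C) (hC1 : C ≤ 1) (hM1 : L - 2*R ≤ M) :
    -5 * L * R ≤ (M^2 - 1/4)/C - 1/4 - L*(L+1) := by
  have hM0 : (0:ℝ) ≤ L - 2*R := by linarith
  have hMsq : (L-2*R)^2 ≤ M^2 := pow_le_pow_left₀ hM0 hM1 2
  have h14 : (0:ℝ) ≤ M^2 - 1/4 := by
    nlinarith [mul_nonneg (show (0:ℝ) ≤ L - 2*R - 1/2 by linarith) hM0]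
  have h1 : M^2 - 1/4 ≤ (M^2 - 1/4)/C := by
    rw [le_div_iff₀ hC0]; nlinarith
  nlinarith [mul_nonneg (by linarith : (0:ℝ) ≤ L) (by linarith : (0:ℝ) ≤ R - 2),
    sq_nonneg R]


lemma aux2_upper (a L M C x : ℝ) (ha0 : 0 < a) (ha1 : a < 1) (hL : 1 ≤ L)
    (hx0 : 0 < x) (hx2 : (1+a)*x^2 ≤ 2*(1-a))
    (hMa : M^2 ≤ a*x^2*L^2) (hC0 : 0 < C) (hCx : (x - x^3/4)^2 ≤ C) :
    (M^2 - 1/4)/C - 1/4 - L*(L+1) ≤ -((1-a)/2) * L^2 := by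
  rw [sub_le_iff_le_add, sub_le_iff_le_add, div_le_iff₀ hC0]
  set K : ℝ := -((1-a)/2) * L^2 + L * (L+1) + 1/4 with hKdef
  have hK : (1+a)/2 * L^2 ≤ K := by nlinarith
  have hK0 : 0 ≤ K :=
    le_trans (mul_nonneg (by linarith) (sq_nonneg L)) hK
  have hKC : K * ((x - x^3/4)^2) ≤ K * C := mul_le_mul_of_nonneg_left hCx hK0
  have key : a*x^2*L^2 ≤ K * ((x - x^3/4)^2) := by
    have h1 : (0:ℝ) ≤ x^2 * (2*(1-a) - (1+a)*x^2) :=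
      mul_nonneg (sq_nonneg x) (by linarith)
    nlinarith [mul_nonneg h1 (sq_nonneg L), sq_nonneg (x*x*x*L),
      mul_nonneg (mul_nonneg (sq_nonneg x) (sq_nonneg x)) (sq_nonneg L),
      mul_nonneg (le_of_lt ha0) (mul_nonneg (mul_nonneg (sq_nonneg x) (sq_nonneg x)) (sq_nonneg L))]
  nlinarith

lemma aux2_lower (L M C : ℝ) (hM : 1 ≤ M) (hC0 : 0 < C) (hC1 : C ≤ 1) (hL : 1 ≤ L) :
    -3 * L^2 ≤ (M^2 - 1/4)/C - 1/4 - L*(L+1) := by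
  have h14 : (0:ℝ) ≤ M^2 - 1/4 := by nlinarith
  have h1 : M^2 - 1/4 ≤ (M^2 - 1/4)/C := by
    rw [le_div_iff₀ hC0]; nlinarith
  nlinarith


noncomputable def Qlm (ℓ : ℕ) (m : ℤ) (θ : ℝ) : ℝ :=
  ((m : ℝ) ^ 2 - 1 / 4) / Real.cos θ ^ 2 - 1 / 4 - (ℓ : ℝ) * ((ℓ : ℝ) + 1)

set_option maxHeartbeats 2000000 in
theorem stmt_4 (r : ℕ → ℝ) (hrpos : ∀ ℓ, 0 < r ℓ)
    (hrinf : Tendsto r atTop atTop)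
    (hr0 : Tendsto (fun ℓ : ℕ => r ℓ / (ℓ : ℝ)) atTop (nhds 0))
    (η₁ η₂ : ℝ) (hη₁ : 2 < η₁) (hη₂0 : 0 < η₂) (hη₂ : η₂ < Real.sqrt 2) :
    (∃ c₁ > (0:ℝ), ∃ c₂ > (0:ℝ), ∃ L : ℕ, 1 ≤ L ∧
      ∀ ℓ : ℕ, L ≤ ℓ → ∀ m : ℤ,
        (ℓ : ℝ) - 2 * r ℓ ≤ (m : ℝ) → (m : ℝ) ≤ (ℓ : ℝ) - r ℓ →
        ∀ θ : ℝ, |θ| < η₂ * Real.sqrt (r ℓ / (ℓ : ℝ)) →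
          -c₁ * ℓ * r ℓ ≤ Qlm ℓ m θ ∧ Qlm ℓ m θ ≤ -c₂ * ℓ * r ℓ) ∧
    (∃ c₁ > (0:ℝ), ∃ c₂ > (0:ℝ), ∃ L : ℕ, 1 ≤ L ∧
      ∀ ℓ : ℕ, L ≤ ℓ → ∀ m : ℤ,
        r ℓ ≤ (m : ℝ) → (m : ℝ) ≤ 2 * r ℓ →
        ∀ θ : ℝ, |θ| < π / 2 - η₁ * r ℓ / (ℓ : ℝ) →
          -c₁ * (ℓ : ℝ) ^ 2 ≤ Qlm ℓ m θ ∧ Qlm ℓ m θ ≤ -c₂ * (ℓ : ℝ) ^ 2) := by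
  constructor
  · -- Part 1
    have ha0 : (0:ℝ) < η₂^2 := by positivity
    have ha2 : η₂^2 < 2 := by
      have h2 : (Real.sqrt 2)^2 = 2 := Real.sq_sqrt (by norm_num)
      nlinarith
    have hε₁ : (0:ℝ) < min ((2-η₂^2)/2) (min (1/(2*η₂^2+2)) (1/4)) :=
      lt_min (by linarith) (lt_min (by positivity) (by norm_num))
    obtain ⟨L₀, hL₀⟩ := eventually_atTop.1
      ((hrinf.eventually_ge_atTop 2).and (hr0.eventually_lt_const hε₁))
    refine ⟨5, by norm_num, (2-η₂^2)/2, by linarith, max L₀ 1, le_max_right _ _, ?_⟩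
    intro ℓ hℓ m hm1 hm2 θ hθ
    obtain ⟨hR2', hs⟩ := hL₀ ℓ (le_trans (le_max_left _ _) hℓ)
    have hℓ1 : (1:ℝ) ≤ (ℓ:ℝ) := by
      exact_mod_cast le_trans (le_max_right _ _) hℓ
    have hℓ0 : (0:ℝ) < (ℓ:ℝ) := by linarith
    have hs1 : r ℓ / ℓ < (2-η₂^2)/2 := lt_of_lt_of_le hs (min_le_left _ _)
    have hs2 : r ℓ / ℓ < 1/(2*η₂^2+2) :=
      lt_of_lt_of_le hs (le_trans (min_le_right _ _) (min_le_left _ _))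
    have hs3 : r ℓ / ℓ < 1/4 :=
      lt_of_lt_of_le hs (le_trans (min_le_right _ _) (min_le_right _ _))
    have hR1 : 2 * r ℓ ≤ (2-η₂^2)*(ℓ:ℝ) := by
      have := (div_lt_div_iff₀ hℓ0 (by norm_num : (0:ℝ) < 2)).1 hs1
      linarith
    have hR2 : (2*η₂^2+2) * r ℓ ≤ (ℓ:ℝ) := by
      have := (div_lt_div_iff₀ hℓ0 (by positivity : (0:ℝ) < 2*η₂^2+2)).1 hs2
      linarith
    have hR4 : 4 * r ℓ ≤ (ℓ:ℝ) := by
      have := (div_lt_div_iff₀ hℓ0 (by norm_num : (0:ℝ) < 4)).1 hs3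
      linarith
    have hsdiv0 : (0:ℝ) ≤ r ℓ / ℓ := by positivity
    have hsq : θ^2 < η₂^2 * (r ℓ / ℓ) := by
      have h1 : |θ| * |θ| < (η₂ * Real.sqrt (r ℓ / ℓ)) * (η₂ * Real.sqrt (r ℓ / ℓ)) :=
        mul_self_lt_mul_self (abs_nonneg θ) hθ
      calc θ^2 = |θ| * |θ| := by rw [abs_mul_abs_self]; ring
        _ < _ := h1
        _ = η₂^2 * (r ℓ / ℓ) := by
            rw [mul_mul_mul_comm, Real.mul_self_sqrt hsdiv0]; ring
    have hsmall : θ^2 < 1/2 := by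
      have h2 : η₂^2 * (r ℓ / ℓ) < η₂^2 * (1/(2*η₂^2+2)) :=
        mul_lt_mul_of_pos_left hs2 ha0
      have h3 : η₂^2 * (1/(2*η₂^2+2)) ≤ 1/2 := by
        rw [mul_one_div, div_le_iff₀ (by positivity)]; nlinarith
      linarith
    have hcos : 1 - θ^2/2 ≤ Real.cos θ := Real.one_sub_sq_div_two_le_cos
    have hcosθ0 : 0 < Real.cos θ := by nlinarith
    have hC0 : 0 < Real.cos θ^2 := by positivity
    have hC1 : Real.cos θ^2 ≤ 1 := Real.cos_sq_le_one θ
    have h4a : (1 - θ^2/2)^2 ≤ Real.cos θ^2 := by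
      apply pow_le_pow_left₀ (by linarith) hcos
    have h4 : 1 - η₂^2 * (r ℓ / ℓ) ≤ Real.cos θ^2 := by
      nlinarith [sq_nonneg (θ^2)]
    have hCL : (ℓ:ℝ) - η₂^2 * r ℓ ≤ Real.cos θ^2 * ℓ := by
      have h5 := mul_le_mul_of_nonneg_right h4 hℓ0.le
      have h6 : (1 - η₂^2*(r ℓ/ℓ)) * (ℓ:ℝ) = (ℓ:ℝ) - η₂^2 * r ℓ := by
        field_simp
      linarith [h5, h6.symm.le, h6.le]
    unfold Qlm
    exact ⟨aux1_lower (ℓ:ℝ) (r ℓ) (m:ℝ) (Real.cos θ^2) hℓ1 hR2' hR4 hC0 hC1 hm1,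
      aux1_upper (η₂^2) (ℓ:ℝ) (r ℓ) (m:ℝ) (Real.cos θ^2) ha0.le ha2 hℓ1 hR2' hR1 hR2 hR4
        hC0 hCL hm1 hm2⟩
  · -- Part 2
    have hη₁0 : (0:ℝ) < η₁ := by linarith
    obtain ⟨a, hadef⟩ : ∃ a : ℝ, a = 4/η₁^2 := ⟨_, rfl⟩
    have ha0 : (0:ℝ) < a := by rw [hadef]; positivity
    have ha1 : a < 1 := by
      rw [hadef, div_lt_one (by positivity)]; nlinarith
    have hε : (0:ℝ) < min 1 (2*(1-a)/(1+a)) :=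
      lt_min one_pos (div_pos (by linarith) (by linarith))
    have htend : Tendsto (fun n : ℕ => η₁ * (r n / n)) atTop (nhds 0) := by
      have := hr0.const_mul η₁
      rwa [mul_zero] at this
    obtain ⟨L₀, hL₀⟩ := eventually_atTop.1
      ((hrinf.eventually_ge_atTop 1).and (htend.eventually_lt_const hε))
    refine ⟨3, by norm_num, (1-a)/2, by linarith, max L₀ 1, le_max_right _ _, ?_⟩
    intro ℓ hℓ m hm1 hm2 θ hθ
    obtain ⟨hr1, hx⟩ := hL₀ ℓ (le_trans (le_max_left _ _) hℓ)
    have hℓ1 : (1:ℝ) ≤ (ℓ:ℝ) := by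
      exact_mod_cast le_trans (le_max_right _ _) hℓ
    have hℓ0 : (0:ℝ) < (ℓ:ℝ) := by linarith
    obtain ⟨x, hxdef⟩ : ∃ x : ℝ, x = η₁ * (r ℓ / (ℓ:ℝ)) := ⟨_, rfl⟩
    rw [← hxdef] at hx
    have hrw : x = η₁ * r ℓ / (ℓ:ℝ) := by rw [hxdef, mul_div_assoc]
    rw [← hrw] at hθ
    have hx0 : 0 < x := by
      rw [hxdef]; exact mul_pos hη₁0 (div_pos (hrpos ℓ) hℓ0)
    have hx1 : x ≤ 1 := le_trans hx.le (min_le_left _ _)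
    have h1a : (0:ℝ) < 1 + a := by linarith
    have hx2 : (1+a)*x^2 ≤ 2*(1-a) := by
      have hxε2 : x ≤ 2*(1-a)/(1+a) := le_trans hx.le (min_le_right _ _)
      have heq : (1+a) * (2*(1-a)/(1+a)) = 2*(1-a) := by field_simp
      have h7 : (1+a)*x ≤ (1+a)*(2*(1-a)/(1+a)) :=
        mul_le_mul_of_nonneg_left hxε2 h1a.le
      have h8 : x^2 ≤ x := by nlinarith [mul_nonneg hx0.le (sub_nonneg.2 hx1)]
      have h9 : (1+a)*x^2 ≤ (1+a)*x := mul_le_mul_of_nonneg_left h8 h1a.le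
      linarith
    have hM1 : (1:ℝ) ≤ (m:ℝ) := le_trans hr1 hm1
    have hMa : (m:ℝ)^2 ≤ a * x^2 * (ℓ:ℝ)^2 := by
      have hℓne : (ℓ:ℝ) ≠ 0 := ne_of_gt hℓ0
      have hxl : x * (ℓ:ℝ) = η₁ * r ℓ := by
        rw [hxdef, mul_assoc, div_mul_cancel₀ _ hℓne]
      have haη : a * η₁^2 = 4 := by
        rw [hadef, div_mul_cancel₀ _ (pow_ne_zero 2 (ne_of_gt hη₁0))]
      have hkey : a * x^2 * (ℓ:ℝ)^2 = 4 * (r ℓ)^2 := by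
        calc a * x^2 * (ℓ:ℝ)^2 = a * (x * ℓ)^2 := by ring
          _ = a * (η₁ * r ℓ)^2 := by rw [hxl]
          _ = (a * η₁^2) * (r ℓ)^2 := by ring
          _ = 4 * (r ℓ)^2 := by rw [haη]
      have hm0 : (0:ℝ) ≤ (m:ℝ) := by linarith
      nlinarith [mul_self_le_mul_self hm0 hm2]
    have hxpi : x - x^3/4 > 0 := by
      have h8 : x^3 ≤ x := by
        nlinarith [mul_nonneg (mul_nonneg hx0.le hx0.le) (sub_nonneg.2 hx1),
          mul_nonneg hx0.le (sub_nonneg.2 hx1)]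
      linarith
    have hcc : Real.cos (π/2 - x) ≤ Real.cos |θ| :=
      Real.cos_le_cos_of_nonneg_of_le_pi (abs_nonneg θ)
        (by linarith [Real.pi_gt_three] : π/2 - x ≤ π) hθ.le
    rw [Real.cos_pi_div_two_sub, Real.cos_abs] at hcc
    have hsin : x - x^3/4 < Real.sin x := by
      have := Real.sin_gt_sub_cube hx0
      linarith [pow_pos hx0 3]
    have hcosθ : 0 < Real.cos θ := by linarith
    have hC0 : 0 < Real.cos θ^2 := by positivity
    have hC1 : Real.cos θ^2 ≤ 1 := Real.cos_sq_le_one θ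
    have hCx : (x - x^3/4)^2 ≤ Real.cos θ^2 :=
      pow_le_pow_left₀ hxpi.le (by linarith) 2
    unfold Qlm
    exact ⟨aux2_lower (ℓ:ℝ) (m:ℝ) (Real.cos θ^2) hM1 hC0 hC1 hℓ1,
      aux2_upper a (ℓ:ℝ) (m:ℝ) (Real.cos θ^2) x ha0 ha1 hℓ1 hx0 hx2 hMa hC0 hCx⟩
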